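/- For every positive integer β and distinct positive integers x_1,...,x_n, we have d_{x_1+β+n}···d_{x_n+β+n} · [(β−1)!·β!···(β+n−2)!] / [(x_1+2)_{β+n−1}···(x_n+2)_{β+n−1}] · ∏_{1≤i<j≤n}|x_j−x_i| ≥ 1, where d_m = lcm(1,...,m). -/

import Mathlib

/-- `d_m` denotes `lcm(1,…,m)`. -/
def dlcm (m : ℕ) : ℕ := (Finset.Icc 1 m).lcm id

namespace GenExtrap

open Finset

lemma dlcm_def (m : ℕ) : dlcm m = (Finset.Icc 1 m).lcm id := rfl

lemma dlcm_pos (m : ℕ) : 0 < dlcm m := by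
  rw [dlcm, pos_iff_ne_zero]
  intro h
  have := Finset.lcm_eq_zero_iff.mp h
  simp [Finset.mem_Icc] at this

lemma dvd_dlcm {k m : ℕ} (hk : 0 < k) (hkm : k ≤ m) : k ∣ dlcm m :=
  Finset.dvd_lcm (by simp [Finset.mem_Icc]; omega)

lemma asc_prod (a k : ℕ) : a.ascFactorial k = ∏ i ∈ range k, (a + i) := by
  induction k with
  | zero => simp
  | succ k ih => rw [Nat.ascFactorial_succ, prod_range_succ, ih, mul_comm]

lemma asc_add (a u v : ℕ) :
    a.ascFactorial (u + v) = a.ascFactorial u * (a + u).ascFactorial v := by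
  induction v with
  | zero => simp
  | succ v ih =>
    rw [← Nat.add_assoc, Nat.ascFactorial_succ, ih, Nat.ascFactorial_succ]
    ring

lemma asc_pos {a : ℕ} (h : 0 < a) (k : ℕ) : 0 < a.ascFactorial k := by
  obtain ⟨b, rfl⟩ := Nat.exists_eq_succ_of_ne_zero h.ne'
  exact Nat.ascFactorial_pos b k

lemma chu (a b s : ℕ) :
    (a + b).ascFactorial s =
      ∑ m ∈ range (s + 1), s.choose m * (a.ascFactorial m * b.ascFactorial (s - m)) := by
  induction s with
  | zero => simp
  | succ s ih =>
    rw [Nat.ascFactorial_succ, ih, Finset.mul_sum]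
    have split : ∀ m ∈ range (s + 1),
        (a + b + s) * (s.choose m * (a.ascFactorial m * b.ascFactorial (s - m))) =
          s.choose m * (a.ascFactorial (m+1) * b.ascFactorial (s - m)) +
          s.choose m * (a.ascFactorial m * b.ascFactorial (s - m + 1)) := by
      intro m hm
      rw [mem_range] at hm
      rw [Nat.ascFactorial_succ, Nat.ascFactorial_succ]
      have : a + b + s = (a + m) + (b + (s - m)) := by omega
      rw [this]
      ring
    rw [Finset.sum_congr rfl split, Finset.sum_add_distrib]
    have hR : ∑ m ∈ range (s + 2), (s+1).choose m * (a.ascFactorial m * b.ascFactorial (s + 1 - m)) =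
        b.ascFactorial (s+1) +
          ∑ m ∈ range (s + 1), (s+1).choose (m+1) * (a.ascFactorial (m+1) * b.ascFactorial (s - m)) := by
      rw [Finset.sum_range_succ' (fun m => (s+1).choose m * (a.ascFactorial m * b.ascFactorial (s + 1 - m))) (s+1)]
      rw [add_comm]
      simp [Nat.succ_sub_succ]
    rw [hR]
    have pascal : ∀ m ∈ range (s+1),
        (s+1).choose (m+1) * (a.ascFactorial (m+1) * b.ascFactorial (s - m)) =
          s.choose m * (a.ascFactorial (m+1) * b.ascFactorial (s - m)) +
          s.choose (m+1) * (a.ascFactorial (m+1) * b.ascFactorial (s - m)) := by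
      intro m hm
      rw [Nat.choose_succ_succ, add_mul]
    rw [Finset.sum_congr rfl pascal, Finset.sum_add_distrib]
    have h2 : b.ascFactorial (s+1) +
          ∑ m ∈ range (s + 1), s.choose (m+1) * (a.ascFactorial (m+1) * b.ascFactorial (s - m)) =
        ∑ m ∈ range (s + 1), s.choose m * (a.ascFactorial m * b.ascFactorial (s - m + 1)) := by
      rw [Finset.sum_range_succ' (fun m => s.choose m * (a.ascFactorial m * b.ascFactorial (s - m + 1))) s]
      rw [add_comm]
      congr 1
      · rw [Finset.sum_range_succ, Nat.choose_succ_self]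
        simp only [Nat.zero_mul, add_zero]
        apply Finset.sum_congr rfl
        intro m hm
        rw [mem_range] at hm
        have h' : s - (m + 1) + 1 = s - m := by omega
        rw [h']
      · simp
    omega

lemma frac_id (s k : ℕ) (hk : 0 < k) :
    (((s+1).factorial : ℚ)) / (k.ascFactorial (s+2) : ℚ) =
      (s.factorial : ℚ) / (k.ascFactorial (s+1) : ℚ)
        - (s.factorial : ℚ) / ((k+1).ascFactorial (s+1) : ℚ) := by
  have hA : ((k.ascFactorial (s+1) : ℕ) : ℚ) ≠ 0 := by
    exact_mod_cast (asc_pos hk (s+1)).ne'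
  have hB : (((k+1).ascFactorial (s+1) : ℕ) : ℚ) ≠ 0 := by
    exact_mod_cast (asc_pos (Nat.succ_pos k) (s+1)).ne'
  have hC : ((k.ascFactorial (s+2) : ℕ) : ℚ) ≠ 0 := by
    exact_mod_cast (asc_pos hk (s+2)).ne'
  have r1 : ((k.ascFactorial (s+2) : ℕ) : ℚ) = ((k:ℚ) + s + 1) * (k.ascFactorial (s+1) : ℕ) := by
    have := Nat.ascFactorial_succ (n := k) (k := s+1)
    push_cast [this]; ring
  have r2 : (k:ℚ) * (((k+1).ascFactorial (s+1) : ℕ) : ℚ)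
      = ((k:ℚ) + s + 1) * ((k.ascFactorial (s+1) : ℕ) : ℚ) := by
    have h2 : k * (k+1).ascFactorial (s+1) = (k + (s+1)) * k.ascFactorial (s+1) :=
      Nat.succ_ascFactorial k (s+1)
    have h3 := congrArg (fun t : ℕ => (t : ℚ)) h2
    push_cast at h3
    linear_combination h3
  have r3 : (((s+1).factorial : ℕ) : ℚ) = ((s:ℚ)+1) * (s.factorial : ℕ) := by
    push_cast [Nat.factorial_succ]; ring
  rw [div_sub_div _ _ hA hB, div_eq_div_iff hC (mul_ne_zero hA hB)]
  linear_combination (((k.ascFactorial (s+1) : ℕ) : ℚ) * (((k+1).ascFactorial (s+1) : ℕ) : ℚ)) * r3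
    + ((s.factorial : ℚ) * ((k.ascFactorial (s+1) : ℕ):ℚ) - (s.factorial : ℚ) * (((k+1).ascFactorial (s+1) : ℕ):ℚ)) * r1
    - (s.factorial : ℚ) * ((k.ascFactorial (s+1) : ℕ):ℚ) * r2

lemma key_int (N : ℕ) : ∀ s k : ℕ, 0 < k → k + s ≤ N →
    ∃ z : ℤ, ((s.factorial * dlcm N : ℕ) : ℚ)
        / ((k.ascFactorial (s+1) : ℕ) : ℚ) = (z : ℚ) := by
  intro s
  induction s with
  | zero =>
    intro k hk hle
    obtain ⟨c, hc⟩ := dvd_dlcm hk (by omega : k ≤ N)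
    refine ⟨c, ?_⟩
    have hk' : (k : ℚ) ≠ 0 := by exact_mod_cast hk.ne'
    rw [hc]
    push_cast [Nat.ascFactorial_succ]
    field_simp
    simp only [Nat.factorial_zero, Nat.ascFactorial_zero, Nat.cast_one, add_zero]
    ring
  | succ s ih =>
    intro k hk hle
    obtain ⟨z1, h1⟩ := ih k hk (by omega)
    obtain ⟨z2, h2⟩ := ih (k+1) (by omega) (by omega)
    refine ⟨z1 - z2, ?_⟩
    have key := frac_id s k hk
    have hL : ((s+1).factorial * (dlcm N : ℕ) : ℚ)
        / ((k.ascFactorial (s+2) : ℕ) : ℚ) = ((z1 - z2 : ℤ) : ℚ) := by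
      have := congrArg (fun t : ℚ => t * ((dlcm N : ℕ) : ℚ)) key
      rw [div_mul_eq_mul_div, sub_mul, div_mul_eq_mul_div, div_mul_eq_mul_div] at this
      push_cast at this h1 h2 ⊢
      rw [this, h1, h2]
    exact_mod_cast hL

lemma colexpand (X b nn j : ℕ) (hj : j < nn) :
    X.ascFactorial j * (X + j + b).ascFactorial (nn - 1 - j) =
      ∑ k ∈ range nn, (if j ≤ k then
        X.ascFactorial k * ((nn - 1 - j).choose (k - j) * b.ascFactorial (nn - 1 - k)) else 0) := by
  have hsub : Finset.Ico j nn ⊆ range nn := by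
    intro k hk; rw [mem_Ico] at hk; rw [mem_range]; omega
  have e1 : (∑ k ∈ range nn, (if j ≤ k then
        X.ascFactorial k * ((nn - 1 - j).choose (k - j) * b.ascFactorial (nn - 1 - k)) else 0))
      = ∑ k ∈ Finset.Ico j nn, (if j ≤ k then
        X.ascFactorial k * ((nn - 1 - j).choose (k - j) * b.ascFactorial (nn - 1 - k)) else 0) := by
    refine (Finset.sum_subset hsub ?_).symm
    intro k hk hk'
    rw [mem_range] at hk; rw [mem_Ico] at hk'
    rw [if_neg (by omega)]
  have e2 : (∑ k ∈ Finset.Ico j nn, (if j ≤ k then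
        X.ascFactorial k * ((nn - 1 - j).choose (k - j) * b.ascFactorial (nn - 1 - k)) else 0))
      = ∑ k ∈ Finset.Ico j nn,
        X.ascFactorial k * ((nn - 1 - j).choose (k - j) * b.ascFactorial (nn - 1 - k)) :=
    Finset.sum_congr rfl (fun k hk => if_pos ((mem_Ico.mp hk).1))
  have e3 : (∑ k ∈ Finset.Ico j nn,
        X.ascFactorial k * ((nn - 1 - j).choose (k - j) * b.ascFactorial (nn - 1 - k)))
      = ∑ m ∈ range (nn - j),
        X.ascFactorial (j + m) * ((nn - 1 - j).choose (j + m - j) * b.ascFactorial (nn - 1 - (j + m))) :=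
    Finset.sum_Ico_eq_sum_range _ _ _
  have hnj : nn - j = (nn - 1 - j) + 1 := by omega
  have e4 : (∑ m ∈ range (nn - j),
        X.ascFactorial (j + m) * ((nn - 1 - j).choose (j + m - j) * b.ascFactorial (nn - 1 - (j + m))))
      = ∑ m ∈ range ((nn - 1 - j) + 1),
        X.ascFactorial j * ((nn - 1 - j).choose m * ((X + j).ascFactorial m * b.ascFactorial ((nn - 1 - j) - m))) := by
    rw [hnj]
    refine Finset.sum_congr rfl ?_
    intro m hm
    have x1 : j + m - j = m := by omega
    have x2 : nn - 1 - (j + m) = (nn - 1 - j) - m := by omega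
    rw [x1, x2, asc_add X j m]
    ring
  rw [e1, e2, e3, e4, ← Finset.mul_sum]
  rw [chu (X + j) b (nn - 1 - j), Finset.mul_sum]

end GenExtrap

section Main
open Finset GenExtrap

/-- For a positive integer β and distinct positive integers `x_1,…,x_n`,
`d_{x_1+β+n}⋯d_{x_n+β+n} · [(β−1)!β!⋯(β+n−2)!]/[(x_1+2)_{β+n−1}⋯(x_n+2)_{β+n−1}]
  · ∏_{i<j}|x_j−x_i| ≥ 1`. -/
theorem general_extrapolation (n β : ℕ) (hβ : 0 < β) (x : Fin n → ℕ)
    (hx : ∀ i, 0 < x i) (hinj : Function.Injective x) :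
    1 ≤ (∏ i : Fin n, (dlcm (x i + β + n) : ℚ)) *
        ((∏ j ∈ Finset.range n, ((β + j - 1).factorial : ℚ)) /
          (∏ i : Fin n, (Nat.ascFactorial (x i + 2) (β + n - 1) : ℚ))) *
        ∏ i : Fin n, ∏ j ∈ Finset.Ioi i, |(x j : ℚ) - (x i : ℚ)| := by
  obtain ⟨s, rfl⟩ : ∃ s, β = s + 1 := ⟨β - 1, by omega⟩
  -- clean up ℕ-subtractions in the statement
  have hsub1 : ∀ j : ℕ, s + 1 + j - 1 = s + j := fun j => by omega
  have hsub2 : s + 1 + n - 1 = s + n := by omega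
  simp only [hsub1, hsub2]
  -- matrices
  set v : Fin n → ℚ := fun i => (x i : ℚ) with hv
  set Q : Matrix (Fin n) (Fin n) ℚ :=
    Matrix.of (fun i k : Fin n => (((x i + 2).ascFactorial (k : ℕ) : ℕ) : ℚ)) with hQ
  set A : Matrix (Fin n) (Fin n) ℚ :=
    Matrix.of (fun k j : Fin n => if (j : ℕ) ≤ (k : ℕ) then
      (((n - 1 - (j:ℕ)).choose ((k:ℕ) - (j:ℕ)) * (s+1).ascFactorial (n - 1 - (k:ℕ)) : ℕ) : ℚ)
      else 0) with hA
  set P : Matrix (Fin n) (Fin n) ℚ :=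
    Matrix.of (fun i j : Fin n =>
      (((x i + 2).ascFactorial (j:ℕ) *
        (x i + 2 + (j:ℕ) + (s+1)).ascFactorial (n - 1 - (j:ℕ)) : ℕ) : ℚ)) with hP
  set c : Fin n → ℚ := fun i =>
    ((s.factorial * dlcm (x i + (s+1) + n) : ℕ) : ℚ)
      / (((x i + 2).ascFactorial (s + n) : ℕ) : ℚ) with hc
  set M : Matrix (Fin n) (Fin n) ℚ := Matrix.of (fun i j : Fin n => c i * P i j) with hM
  -- Step 1 : P = Q * A
  have hPQA : P = Q * A := by
    ext i j
    have hcol := colexpand (x i + 2) (s+1) n (j : ℕ) j.isLt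
    have hcolq := congrArg (fun t : ℕ => (t : ℚ)) hcol
    simp only [Nat.cast_sum] at hcolq
    rw [hP]
    show (((x i + 2).ascFactorial (j:ℕ) *
        (x i + 2 + (j:ℕ) + (s+1)).ascFactorial (n - 1 - (j:ℕ)) : ℕ) : ℚ) = (Q * A) i j
    rw [hcolq, Matrix.mul_apply]
    rw [← Fin.sum_univ_eq_sum_range (fun k => ((if (j:ℕ) ≤ k then
        (x i + 2).ascFactorial k * ((n - 1 - (j:ℕ)).choose (k - (j:ℕ)) *
          (s+1).ascFactorial (n - 1 - k)) else 0 : ℕ) : ℚ)) n]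
    apply Finset.sum_congr rfl
    intro k _
    simp only [hQ, hA, Matrix.of_apply]
    by_cases hjk : (j : ℕ) ≤ (k : ℕ)
    · rw [if_pos hjk, if_pos hjk]
      push_cast
      ring
    · rw [if_neg hjk, if_neg hjk, mul_zero, Nat.cast_zero]
  -- Step 2 : det Q is the Vandermonde determinant
  have hdetQ : Q.det = ∏ i : Fin n, ∏ j ∈ Finset.Ioi i, (v j - v i) := by
    have h := Matrix.det_eval_matrixOfPolynomials_eq_det_vandermonde (R := ℚ) v
      (fun k => ∏ m ∈ Finset.range (k : ℕ), (Polynomial.X + Polynomial.C ((m : ℚ) + 2)))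
      (fun k => by
        rw [Polynomial.natDegree_prod _ _ (fun m _ => Polynomial.X_add_C_ne_zero _)]
        have hdeg1 : ∀ m ∈ Finset.range (k : ℕ),
            (Polynomial.X + Polynomial.C ((m:ℚ) + 2)).natDegree = 1 :=
          fun m _ => Polynomial.natDegree_X_add_C _
        rw [Finset.sum_congr rfl hdeg1, Finset.sum_const, smul_eq_mul, mul_one,
          Finset.card_range])
      (fun k => Polynomial.monic_prod_of_monic _ _
        (fun m _ => Polynomial.monic_X_add_C _))
    rw [Matrix.det_vandermonde] at h
    have hQeq : Q = Matrix.of (fun i j : Fin n => Polynomial.eval (v i)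
        ((fun k : Fin n => ∏ m ∈ Finset.range (k : ℕ),
          (Polynomial.X + Polynomial.C ((m : ℚ) + 2))) j)) := by
      rw [hQ]
      ext i k
      simp only [Matrix.of_apply, Polynomial.eval_prod, Polynomial.eval_add,
        Polynomial.eval_X, Polynomial.eval_C]
      rw [asc_prod]
      push_cast
      apply Finset.prod_congr rfl
      intro m _
      simp only [hv]
      ring
    rw [hQeq]
    exact h.symm
  -- Step 3 : det A (lower triangular)
  have hdetA : A.det = ∏ k : Fin n, (((s+1).ascFactorial (n - 1 - (k:ℕ)) : ℕ) : ℚ) := by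
    have htri : A.BlockTriangular OrderDual.toDual := by
      intro i j hij
      have hij' : i < j := hij
      rw [hA]
      simp only [Matrix.of_apply]
      rw [if_neg]
      have : (i : ℕ) < (j : ℕ) := hij'
      omega
    rw [Matrix.det_of_lowerTriangular A htri]
    apply Finset.prod_congr rfl
    intro k _
    rw [hA]
    simp
  -- Step 4 : det M
  have hdetM : M.det = (∏ i : Fin n, c i) *
      ((∏ i : Fin n, ∏ j ∈ Finset.Ioi i, (v j - v i)) *
        ∏ k : Fin n, (((s+1).ascFactorial (n - 1 - (k:ℕ)) : ℕ) : ℚ)) := by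
    rw [hM, Matrix.det_mul_column, hPQA, Matrix.det_mul, hdetQ, hdetA]
  -- Step 5 : the integer matrix
  have hBex : ∀ i j : Fin n, ∃ z : ℤ,
      ((s.factorial * dlcm (x i + (s+1) + n) : ℕ) : ℚ)
        / (((x i + 2 + (j:ℕ)).ascFactorial (s+1) : ℕ) : ℚ) = (z : ℚ) :=
    fun i j => key_int (x i + (s+1) + n) s (x i + 2 + (j:ℕ)) (by omega)
      (by have := j.isLt; omega)
  set B : Matrix (Fin n) (Fin n) ℤ := Matrix.of (fun i j : Fin n => (hBex i j).choose) with hB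
  have hBspec : ∀ i j : Fin n, ((B i j : ℤ) : ℚ) =
      ((s.factorial * dlcm (x i + (s+1) + n) : ℕ) : ℚ)
        / (((x i + 2 + (j:ℕ)).ascFactorial (s+1) : ℕ) : ℚ) :=
    fun i j => ((hBex i j).choose_spec).symm
  -- Step 6 : M = B over ℚ
  have hMB : M = B.map (Int.cast : ℤ → ℚ) := by
    ext i j
    have hij : (M i j : ℚ) = c i * P i j := by rw [hM]; rfl
    have hBij : (B.map (Int.cast : ℤ → ℚ)) i j = ((B i j : ℤ) : ℚ) := rfl
    rw [hij, hBij, hBspec i j]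
    have hsplit : (x i + 2).ascFactorial (s + n) =
        (x i + 2).ascFactorial (j:ℕ) * ((x i + 2 + (j:ℕ)).ascFactorial (s+1) *
          (x i + 2 + (j:ℕ) + (s+1)).ascFactorial (n - 1 - (j:ℕ))) := by
      have h1 : s + n = (j:ℕ) + ((s+1) + (n - 1 - (j:ℕ))) := by have := j.isLt; omega
      rw [h1, asc_add, asc_add]
    have hGne : (((x i + 2).ascFactorial (s + n) : ℕ) : ℚ) ≠ 0 := by
      have : 0 < (x i + 2).ascFactorial (s + n) := asc_pos (by omega) _
      exact_mod_cast this.ne'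
    have hmidne : (((x i + 2 + (j:ℕ)).ascFactorial (s+1) : ℕ) : ℚ) ≠ 0 := by
      have : 0 < (x i + 2 + (j:ℕ)).ascFactorial (s+1) := asc_pos (by omega) _
      exact_mod_cast this.ne'
    rw [hc]
    simp only [hP, Matrix.of_apply]
    rw [div_mul_eq_mul_div, div_eq_div_iff hGne hmidne]
    have hs' := congrArg (fun t : ℕ => (t : ℚ)) hsplit
    push_cast at hs' ⊢
    rw [hs']
    ring
  have hdetMB : ((B.det : ℤ) : ℚ) = M.det := by
    rw [hMB]
    have := (Int.castRingHom ℚ).map_det B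
    simpa [Matrix.map] using this
  -- Step 7 : positivity and nonvanishing
  have hcpos : ∀ i, 0 < c i := by
    intro i
    apply div_pos
    · have : 0 < s.factorial * dlcm (x i + (s+1) + n) :=
        Nat.mul_pos s.factorial_pos (dlcm_pos _)
      exact_mod_cast this
    · have : 0 < (x i + 2).ascFactorial (s + n) := asc_pos (by omega) _
      exact_mod_cast this
  have hDpos : 0 < ∏ k : Fin n, (((s+1).ascFactorial (n - 1 - (k:ℕ)) : ℕ) : ℚ) := by
    apply Finset.prod_pos
    intro k _
    have : 0 < (s+1).ascFactorial (n - 1 - (k:ℕ)) := asc_pos (by omega) _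
    exact_mod_cast this
  have hVne : (∏ i : Fin n, ∏ j ∈ Finset.Ioi i, (v j - v i)) ≠ 0 := by
    apply Finset.prod_ne_zero_iff.mpr
    intro i _
    apply Finset.prod_ne_zero_iff.mpr
    intro j hj
    rw [Finset.mem_Ioi] at hj
    have : x j ≠ x i := fun h => (ne_of_gt hj).symm (hinj h.symm)
    have : v j ≠ v i := by
      simp only [hv]
      exact_mod_cast this
    exact sub_ne_zero.mpr this
  have hdetMne : M.det ≠ 0 := by
    rw [hdetM]
    exact mul_ne_zero (ne_of_gt (Finset.prod_pos (fun i _ => hcpos i)))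
      (mul_ne_zero hVne (ne_of_gt hDpos))
  have hBdetne : B.det ≠ 0 := by
    intro h
    rw [h] at hdetMB
    exact hdetMne (by exact_mod_cast hdetMB.symm)
  -- Step 8 : 1 ≤ |det B| and conclude
  have h1 : (1 : ℚ) ≤ |M.det| := by
    rw [← hdetMB]
    have : (1 : ℤ) ≤ |B.det| := Int.one_le_abs (by omega)
    calc (1:ℚ) = ((1:ℤ):ℚ) := by norm_num
    _ ≤ ((|B.det| : ℤ) : ℚ) := by exact_mod_cast this
    _ = |((B.det : ℤ) : ℚ)| := by push_cast; ring
  -- compute |det M|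
  have habs : |M.det| = (∏ i : Fin n, c i) *
      ((∏ i : Fin n, ∏ j ∈ Finset.Ioi i, |v j - v i|) *
        ∏ k : Fin n, (((s+1).ascFactorial (n - 1 - (k:ℕ)) : ℕ) : ℚ)) := by
    rw [hdetM, abs_mul, abs_mul]
    rw [abs_of_pos (Finset.prod_pos (fun i _ => hcpos i)), abs_of_pos hDpos]
    congr 1
    congr 1
    rw [Finset.abs_prod]
    exact Finset.prod_congr rfl (fun i _ => Finset.abs_prod _ _)
  -- final algebraic identification
  have hfinal : (∏ i : Fin n, (dlcm (x i + (s+1) + n) : ℚ)) *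
        ((∏ j ∈ Finset.range n, ((s + j).factorial : ℚ)) /
          (∏ i : Fin n, (Nat.ascFactorial (x i + 2) (s + n) : ℚ))) *
        (∏ i : Fin n, ∏ j ∈ Finset.Ioi i, |(x j : ℚ) - (x i : ℚ)|) = |M.det| := by
    rw [habs]
    have hD : (∏ k : Fin n, (((s+1).ascFactorial (n - 1 - (k:ℕ)) : ℕ) : ℚ))
        = ∏ j ∈ Finset.range n, (((s+1).ascFactorial j : ℕ) : ℚ) := by
      rw [Fin.prod_univ_eq_prod_range (fun k => (((s+1).ascFactorial (n - 1 - k) : ℕ) : ℚ)) n]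
      exact Finset.prod_range_reflect (fun j => (((s+1).ascFactorial j : ℕ) : ℚ)) n
    have hF : (∏ j ∈ Finset.range n, ((s + j).factorial : ℚ))
        = (s.factorial : ℚ)^n * ∏ j ∈ Finset.range n, (((s+1).ascFactorial j : ℕ) : ℚ) := by
      have h1 : ∀ j ∈ Finset.range n, ((s + j).factorial : ℚ)
          = (s.factorial : ℚ) * (((s+1).ascFactorial j : ℕ) : ℚ) := by
        intro j _
        have := Nat.factorial_mul_ascFactorial s j
        exact_mod_cast (congrArg (fun t : ℕ => (t : ℚ)) this).symm
      rw [Finset.prod_congr rfl h1, Finset.prod_mul_distrib, Finset.prod_const,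
        Finset.card_range]
    have hGne : (∏ i : Fin n, (((x i + 2).ascFactorial (s + n) : ℕ) : ℚ)) ≠ 0 := by
      apply Finset.prod_ne_zero_iff.mpr
      intro i _
      have : 0 < (x i + 2).ascFactorial (s + n) := asc_pos (by omega) _
      exact_mod_cast this.ne'
    have hcG : (∏ i : Fin n, c i) * (∏ i : Fin n, (((x i + 2).ascFactorial (s + n) : ℕ) : ℚ))
        = (s.factorial : ℚ)^n * ∏ i : Fin n, (dlcm (x i + (s+1) + n) : ℚ) := by
      rw [← Finset.prod_mul_distrib]
      have h2 : ∀ i ∈ Finset.univ, c i * (((x i + 2).ascFactorial (s + n) : ℕ) : ℚ)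
          = (s.factorial : ℚ) * (dlcm (x i + (s+1) + n) : ℚ) := by
        intro i _
        rw [hc]
        have hne : (((x i + 2).ascFactorial (s + n) : ℕ) : ℚ) ≠ 0 := by
          have : 0 < (x i + 2).ascFactorial (s + n) := asc_pos (by omega) _
          exact_mod_cast this.ne'
        rw [div_mul_cancel₀ _ hne]
        push_cast
        ring
      rw [Finset.prod_congr rfl h2, Finset.prod_mul_distrib, Finset.prod_const,
        Finset.card_univ, Fintype.card_fin]
    have key : (∏ i : Fin n, (dlcm (x i + (s+1) + n) : ℚ)) *
        ((∏ j ∈ Finset.range n, ((s + j).factorial : ℚ)) /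
          (∏ i : Fin n, (Nat.ascFactorial (x i + 2) (s + n) : ℚ)))
        = (∏ i : Fin n, c i) * ∏ k : Fin n, (((s+1).ascFactorial (n - 1 - (k:ℕ)) : ℕ) : ℚ) := by
      rw [mul_div_assoc', div_eq_iff hGne, hF, hD]
      linear_combination (-(∏ j ∈ Finset.range n, (((s+1).ascFactorial j : ℕ) : ℚ))) * hcG
    linear_combination (∏ i : Fin n, ∏ j ∈ Finset.Ioi i, |v j - v i|) * key
  rw [hfinal]
  exact h1

end Main
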